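/- The stabilizer norm is multiplicative under tensor (Kronecker) products: for an n-qubit complex matrix A and an m-qubit complex matrix B, D(A ⊗ B) = D(A) · D(B), where A ⊗ B is viewed as an (n+m)-qubit matrix. -/

import Mathlib

open Matrix BigOperators Kronecker

noncomputable section

/-- The four single-qubit Pauli matrices `I, X, Y, Z`. -/
def pauli1 : Fin 4 → Matrix (Fin 2) (Fin 2) ℂ :=
  ![(1 : Matrix (Fin 2) (Fin 2) ℂ),
    !![0, 1; 1, 0],
    !![0, -Complex.I; Complex.I, 0],
    !![1, 0; 0, -1]]

/-- The `n`-qubit Pauli matrix `σ_{s 0} ⊗ ⋯ ⊗ σ_{s (n-1)}`, as a matrix on `Fin n → Fin 2`. -/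
def nPauli (n : ℕ) (s : Fin n → Fin 4) :
    Matrix (Fin n → Fin 2) (Fin n → Fin 2) ℂ :=
  Matrix.of fun x y => ∏ k : Fin n, pauli1 (s k) (x k) (y k)

/-- The stabilizer norm `D(A) = 2^{-n} Σ_{σ ∈ P_n} |Tr(σ A)|`. -/
def stabNorm {n : ℕ} (A : Matrix (Fin n → Fin 2) (Fin n → Fin 2) ℂ) : ℝ :=
  ((2 : ℝ) ^ n)⁻¹ * ∑ s : Fin n → Fin 4, ‖(nPauli n s * A).trace‖

/-- The Kronecker (tensor) product of an `n`-qubit matrix and an `m`-qubit matrix,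
viewed as an `(n+m)`-qubit matrix. -/
def qKron {n m : ℕ} (A : Matrix (Fin n → Fin 2) (Fin n → Fin 2) ℂ)
    (B : Matrix (Fin m → Fin 2) (Fin m → Fin 2) ℂ) :
    Matrix (Fin (n + m) → Fin 2) (Fin (n + m) → Fin 2) ℂ :=
  Matrix.of fun x y =>
    A (fun i => x (Fin.castAdd m i)) (fun i => y (Fin.castAdd m i)) *
    B (fun j => x (Fin.natAdd n j)) (fun j => y (Fin.natAdd n j))

def appEquiv (n m : ℕ) (α : Type*) : ((Fin n → α) × (Fin m → α)) ≃ (Fin (n + m) → α) where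
  toFun p := Fin.append p.1 p.2
  invFun f := (fun i => f (Fin.castAdd m i), fun j => f (Fin.natAdd n j))
  left_inv p := by
    ext i <;> simp [Fin.append_left, Fin.append_right]
  right_inv f := by
    funext k
    refine Fin.addCases (fun i => ?_) (fun j => ?_) k <;>
      simp [Fin.append_left, Fin.append_right]

lemma four_swap {α β γ δ : Type*} [Fintype α] [Fintype β] [Fintype γ] [Fintype δ]
    (F : α → β → ℂ) (G : γ → δ → ℂ) :
    ∑ p : α × γ, ∑ q : β × δ, F p.1 q.1 * G p.2 q.2
      = (∑ a : α, ∑ b : β, F a b) * (∑ c : γ, ∑ d : δ, G c d) := by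
  simp only [Fintype.sum_prod_type]
  rw [Finset.sum_mul_sum]
  refine Finset.sum_congr rfl fun a _ => Finset.sum_congr rfl fun c _ => ?_
  rw [Finset.sum_mul_sum]

lemma trace_kron (n m : ℕ)
    (A : Matrix (Fin n → Fin 2) (Fin n → Fin 2) ℂ)
    (B : Matrix (Fin m → Fin 2) (Fin m → Fin 2) ℂ)
    (s₁ : Fin n → Fin 4) (s₂ : Fin m → Fin 4) :
    (nPauli (n + m) (Fin.append s₁ s₂) * qKron A B).trace
      = (nPauli n s₁ * A).trace * (nPauli m s₂ * B).trace := by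
  simp only [Matrix.trace, Matrix.diag, Matrix.mul_apply, nPauli, qKron, Matrix.of_apply]
  rw [← four_swap (fun a b => (∏ k : Fin n, pauli1 (s₁ k) (a k) (b k)) * A b a)
        (fun c d => (∏ k : Fin m, pauli1 (s₂ k) (c k) (d k)) * B d c)]
  refine (Fintype.sum_equiv (appEquiv n m (Fin 2)) _ _ fun p => ?_).symm
  beta_reduce
  refine Fintype.sum_equiv (appEquiv n m (Fin 2)) _ _ fun q => ?_
  simp only [appEquiv, Equiv.coe_fn_mk, Fin.append_left, Fin.append_right]
  rw [Fin.prod_univ_add]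
  simp only [Fin.append_left, Fin.append_right]
  ring

/-- The stabilizer norm is multiplicative under tensor products:
`D(A ⊗ B) = D(A) · D(B)`. -/
theorem stabNorm_kron (n m : ℕ) (hn : 1 ≤ n) (hm : 1 ≤ m)
    (A : Matrix (Fin n → Fin 2) (Fin n → Fin 2) ℂ)
    (B : Matrix (Fin m → Fin 2) (Fin m → Fin 2) ℂ) :
    stabNorm (qKron A B) = stabNorm A * stabNorm B := by
  unfold stabNorm
  have h1 : ∑ s : Fin (n + m) → Fin 4, ‖(nPauli (n + m) s * qKron A B).trace‖
      = ∑ p : (Fin n → Fin 4) × (Fin m → Fin 4),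
          ‖(nPauli n p.1 * A).trace‖ * ‖(nPauli m p.2 * B).trace‖ := by
    refine (Fintype.sum_equiv (appEquiv n m (Fin 4)) _ _ fun p => ?_).symm
    show _ = ‖(nPauli (n + m) (Fin.append p.1 p.2) * qKron A B).trace‖
    rw [trace_kron]
    exact (norm_mul _ _).symm
  rw [h1, Fintype.sum_prod_type]
  simp only []
  rw [← Finset.sum_mul_sum]
  rw [pow_add, mul_inv]
  ring
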